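/- (Theorem 2) Let n ≥ 1 and let u₁,…,uₙ, v₁,…,vₙ ∈ ℝ³ be unit vectors. Let Oₙ := (1/√n) Σᵢ₌₁ⁿ (uᵢ·σ) ⊗ (vᵢ·σ) be the n-settings linear steering operator. Then there exist unitary 2×2 complex matrices U and V such that the maximally entangled state φ := (U ⊗ V) ((e₍₀,₀₎ + e₍₁,₁₎)/√2) satisfies: for every unit vector ψ ∈ ℂ^(Fin 2 × Fin 2), |⟨ψ, Oₙ ψ⟩| ≤ |⟨φ, Oₙ φ⟩|. That is, the maximum magnitude of the left-hand side of the n-settings linear steering inequality over all two-qubit states is achieved by a maximally entangled two-qubit state. -/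

import Mathlib

open Matrix Kronecker Complex

/-- The Pauli matrix σ₁. -/
noncomputable def σ1 : Matrix (Fin 2) (Fin 2) ℂ := !![0, 1; 1, 0]

/-- The Pauli matrix σ₂. -/
noncomputable def σ2 : Matrix (Fin 2) (Fin 2) ℂ := !![0, -Complex.I; Complex.I, 0]

/-- The Pauli matrix σ₃. -/
noncomputable def σ3 : Matrix (Fin 2) (Fin 2) ℂ := !![1, 0; 0, -1]

/-- For `a ∈ ℝ³`, the observable `a·σ = a₁σ₁ + a₂σ₂ + a₃σ₃`. -/
noncomputable def pauliDot (a : Fin 3 → ℝ) : Matrix (Fin 2) (Fin 2) ℂ :=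
  (a 0 : ℂ) • σ1 + (a 1 : ℂ) • σ2 + (a 2 : ℂ) • σ3

lemma pauliDot_eq (a : Fin 3 → ℝ) :
    pauliDot a = !![(a 2 : ℂ), (a 0 : ℂ) - (a 1 : ℂ) * Complex.I;
                    (a 0 : ℂ) + (a 1 : ℂ) * Complex.I, -(a 2 : ℂ)] := by
  ext i j
  fin_cases i <;> fin_cases j <;> simp [pauliDot, σ1, σ2, σ3] <;> ring

lemma pauliDot_isHermitian (a : Fin 3 → ℝ) : (pauliDot a).IsHermitian := by
  rw [Matrix.IsHermitian, pauliDot_eq]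
  ext i j
  fin_cases i <;> fin_cases j <;>
    simp [Matrix.conjTranspose_apply, Complex.conj_ofReal] <;> ring

lemma pauliDot_conj_σ2 (a : Fin 3 → ℝ) :
    pauliDot a * σ2 = -(σ2 * (pauliDot a).map (starRingEnd ℂ)) := by
  rw [pauliDot_eq]
  ext i j
  fin_cases i <;> fin_cases j <;>
    simp [Matrix.mul_apply, Matrix.vecMul, dotProduct, Fin.sum_univ_two, σ2,
      Matrix.map_apply, Complex.conj_ofReal] <;> ring_nf <;>
    simp [Complex.I_sq] <;> ring

lemma σ2_mul_σ2 : σ2 * σ2 = 1 := by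
  ext i j
  fin_cases i <;> fin_cases j <;>
    simp [Matrix.mul_apply, Fin.sum_univ_two, σ2, Matrix.one_apply, Complex.I_mul_I]

lemma σ2_map_star : σ2.map (starRingEnd ℂ) = -σ2 := by
  ext i j
  fin_cases i <;> fin_cases j <;> simp [σ2, Matrix.map_apply]

lemma kron_conjTranspose (A B : Matrix (Fin 2) (Fin 2) ℂ) : (A ⊗ₖ B)ᴴ = Aᴴ ⊗ₖ Bᴴ := by
  ext ⟨i, j⟩ ⟨k, l⟩
  simp [Matrix.conjTranspose_apply, Matrix.kroneckerMap_apply, star_mul', mul_comm]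

lemma kron_map_star (A B : Matrix (Fin 2) (Fin 2) ℂ) :
    (A ⊗ₖ B).map (starRingEnd ℂ) = A.map (starRingEnd ℂ) ⊗ₖ B.map (starRingEnd ℂ) := by
  ext ⟨i, j⟩ ⟨k, l⟩
  simp [Matrix.map_apply, Matrix.kroneckerMap_apply]

lemma conj_mulVec {m n : Type*} [Fintype n] (M : Matrix m n ℂ) (x : n → ℂ) :
    star (M *ᵥ x) = M.map (starRingEnd ℂ) *ᵥ (star x) := by
  funext i
  show (starRingEnd ℂ) ((M *ᵥ x) i) = _
  simp [Matrix.mulVec, dotProduct, Matrix.map_apply, map_sum]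

noncomputable def S2 : Matrix (Fin 2 × Fin 2) (Fin 2 × Fin 2) ℂ := σ2 ⊗ₖ σ2

lemma S2_mul_S2 : S2 * S2 = 1 := by
  rw [S2, ← Matrix.mul_kronecker_mul, σ2_mul_σ2, Matrix.one_kronecker_one]

lemma S2_map_star : S2.map (starRingEnd ℂ) = S2 := by
  rw [S2, kron_map_star, σ2_map_star]
  ext ⟨i, j⟩ ⟨k, l⟩
  simp [Matrix.kroneckerMap_apply]

lemma map_conj_smul (r : ℂ) {m n : Type*} (M : Matrix m n ℂ) :
    (r • M).map (starRingEnd ℂ) = (starRingEnd ℂ) r • M.map (starRingEnd ℂ) := by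
  ext i j; simp [Matrix.map_apply]

lemma map_conj_sum {ι m n : Type*} (s : Finset ι) (f : ι → Matrix m n ℂ) :
    (∑ i ∈ s, f i).map (starRingEnd ℂ) = ∑ i ∈ s, (f i).map (starRingEnd ℂ) := by
  ext i j; simp [Matrix.map_apply, Matrix.sum_apply]

lemma On_symm (n : ℕ) (u v : Fin n → Fin 3 → ℝ) (c : ℝ)
    (On : Matrix (Fin 2 × Fin 2) (Fin 2 × Fin 2) ℂ)
    (hOn : On = ((c : ℝ) : ℂ) • ∑ i, pauliDot (u i) ⊗ₖ pauliDot (v i)) :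
    On * S2 = S2 * On.map (starRingEnd ℂ) := by
  rw [hOn, map_conj_smul, map_conj_sum, Complex.conj_ofReal, Matrix.smul_mul, Matrix.mul_smul,
    Finset.sum_mul, Finset.mul_sum]
  congr 1
  refine Finset.sum_congr rfl fun i _ => ?_
  rw [kron_map_star, S2, ← Matrix.mul_kronecker_mul, ← Matrix.mul_kronecker_mul,
    pauliDot_conj_σ2, pauliDot_conj_σ2]
  rw [show ∀ A B : Matrix (Fin 2) (Fin 2) ℂ, (-A) ⊗ₖ (-B) = A ⊗ₖ B from fun A B => by
    ext ⟨a, b⟩ ⟨k, l⟩; simp [Matrix.kroneckerMap_apply]]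

lemma On_herm (n : ℕ) (u v : Fin n → Fin 3 → ℝ) (c : ℝ)
    (On : Matrix (Fin 2 × Fin 2) (Fin 2 × Fin 2) ℂ)
    (hOn : On = ((c : ℝ) : ℂ) • ∑ i, pauliDot (u i) ⊗ₖ pauliDot (v i)) :
    On.IsHermitian := by
  rw [Matrix.IsHermitian, hOn, Matrix.conjTranspose_smul, Matrix.conjTranspose_sum]
  rw [show star ((c : ℝ) : ℂ) = ((c : ℝ) : ℂ) from Complex.conj_ofReal c]
  congr 1
  refine Finset.sum_congr rfl fun i _ => ?_
  rw [kron_conjTranspose, (pauliDot_isHermitian (u i)), (pauliDot_isHermitian (v i))]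

lemma theta_eig (On : Matrix (Fin 2 × Fin 2) (Fin 2 × Fin 2) ℂ)
    (hsymm : On * S2 = S2 * On.map (starRingEnd ℂ)) (lam : ℝ) (ψ : Fin 2 × Fin 2 → ℂ)
    (h : On *ᵥ ψ = (lam : ℂ) • ψ) :
    On *ᵥ (S2 *ᵥ star ψ) = (lam : ℂ) • (S2 *ᵥ star ψ) := by
  rw [Matrix.mulVec_mulVec, hsymm, ← Matrix.mulVec_mulVec, ← conj_mulVec, h]
  rw [star_smul, Matrix.mulVec_smul]
  simp [Complex.conj_ofReal]

lemma theta_fixed_entries (φ : Fin 2 × Fin 2 → ℂ) (h : S2 *ᵥ star φ = φ) :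
    φ (1, 0) = (starRingEnd ℂ) (φ (0, 1)) ∧ φ (1, 1) = -(starRingEnd ℂ) (φ (0, 0)) := by
  have h10 := congrFun h (1, 0)
  have h11 := congrFun h (1, 1)
  simp [S2, Matrix.mulVec, dotProduct, Fintype.sum_prod_type, Fin.sum_univ_two,
    Matrix.kroneckerMap_apply, σ2, Complex.I_mul_I] at h10 h11
  exact ⟨h10.symm, h11.symm⟩

lemma sqrt2_mul_self : ((Real.sqrt 2 : ℝ) : ℂ) * ((Real.sqrt 2 : ℝ) : ℂ) = 2 := by
  rw [← Complex.ofReal_mul, Real.mul_self_sqrt (by norm_num)]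
  norm_num

lemma U_unitary (a b : ℂ) (h : (starRingEnd ℂ) a * a + (starRingEnd ℂ) b * b = 1 / 2) :
    (!![((Real.sqrt 2 : ℝ) : ℂ) * a, ((Real.sqrt 2 : ℝ) : ℂ) * b;
       ((Real.sqrt 2 : ℝ) : ℂ) * (starRingEnd ℂ) b,
       -(((Real.sqrt 2 : ℝ) : ℂ) * (starRingEnd ℂ) a)] : Matrix (Fin 2) (Fin 2) ℂ)
      ∈ Matrix.unitaryGroup (Fin 2) ℂ := by
  rw [Matrix.mem_unitaryGroup_iff]
  ext i j
  rw [Matrix.star_eq_conjTranspose]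
  fin_cases i <;> fin_cases j
  all_goals
    simp [Matrix.mul_apply, Fin.sum_univ_two, Matrix.conjTranspose_apply, Matrix.one_apply,
      _root_.map_mul, Complex.conj_ofReal, _root_.map_neg]
  all_goals try ring
  · linear_combination ((starRingEnd ℂ) a * a + (starRingEnd ℂ) b * b) * sqrt2_mul_self + 2 * h
  · linear_combination ((starRingEnd ℂ) a * a + (starRingEnd ℂ) b * b) * sqrt2_mul_self + 2 * h

lemma kron_one_mulVec_bell (U : Matrix (Fin 2) (Fin 2) ℂ) (φ : Fin 2 × Fin 2 → ℂ)
    (h00 : U 0 0 = ((Real.sqrt 2 : ℝ) : ℂ) * φ (0, 0))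
    (h01 : U 0 1 = ((Real.sqrt 2 : ℝ) : ℂ) * φ (0, 1))
    (h10 : U 1 0 = ((Real.sqrt 2 : ℝ) : ℂ) * φ (1, 0))
    (h11 : U 1 1 = ((Real.sqrt 2 : ℝ) : ℂ) * φ (1, 1)) :
    (U ⊗ₖ (1 : Matrix (Fin 2) (Fin 2) ℂ)).mulVec ((Real.sqrt 2)⁻¹ •
        ((Pi.single ((0 : Fin 2), (0 : Fin 2)) (1 : ℂ) : (Fin 2 × Fin 2) → ℂ)
          + (Pi.single ((1 : Fin 2), (1 : Fin 2)) (1 : ℂ) : (Fin 2 × Fin 2) → ℂ))) = φ := by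
  have hs : (((Real.sqrt 2 : ℝ) : ℂ))⁻¹ * ((Real.sqrt 2 : ℝ) : ℂ) = 1 :=
    inv_mul_cancel₀ (Complex.ofReal_ne_zero.mpr (by positivity))
  funext x
  obtain ⟨i, j⟩ := x
  simp only [Matrix.mulVec, dotProduct, Fintype.sum_prod_type, Fin.sum_univ_two,
    Matrix.kroneckerMap_apply, Matrix.one_apply, Pi.smul_apply, Pi.add_apply, Pi.single_apply,
    Complex.real_smul, Complex.ofReal_inv]
  fin_cases i <;> fin_cases j
  all_goals simp [h00, h01, h10, h11]
  all_goals rw [mul_comm, ← mul_assoc, hs, one_mul]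

lemma hermitian_quadform_bound {N : Type*} [Fintype N] [DecidableEq N]
    (A : Matrix N N ℂ) (hA : A.IsHermitian) (M : ℝ)
    (hM : ∀ i, |hA.eigenvalues i| ≤ M)
    (ψ : N → ℂ) (hψ : star ψ ⬝ᵥ ψ = 1) :
    ‖(star ψ ⬝ᵥ A *ᵥ ψ)‖ ≤ M := by
  set Um : Matrix N N ℂ := (hA.eigenvectorUnitary : Matrix N N ℂ) with hUm
  set c : N → ℂ := star Um *ᵥ ψ with hc
  have hstarc : star c = star ψ ᵥ* Um := by
    rw [hc, Matrix.star_mulVec, Matrix.star_eq_conjTranspose, Matrix.conjTranspose_conjTranspose]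
  set D : Matrix N N ℂ := Matrix.diagonal (Complex.ofReal ∘ hA.eigenvalues) with hD
  have hkey : star ψ ⬝ᵥ A *ᵥ ψ = star c ⬝ᵥ D *ᵥ c := by
    conv_lhs => rw [hA.spectral_theorem, Unitary.conjStarAlgAut_apply]
    rw [← Matrix.mulVec_mulVec, ← Matrix.mulVec_mulVec, Matrix.dotProduct_mulVec, hstarc]
    rfl
  have hcnorm : star c ⬝ᵥ c = 1 := by
    rw [hstarc, hc, ← Matrix.dotProduct_mulVec, Matrix.mulVec_mulVec,
      (Matrix.mem_unitaryGroup_iff).mp hA.eigenvectorUnitary.2, Matrix.one_mulVec, hψ]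
  have hsum : ∑ i, Complex.normSq (c i) = 1 := by
    have : ((∑ i, Complex.normSq (c i) : ℝ) : ℂ) = 1 := by
      push_cast
      rw [← hcnorm]
      simp [dotProduct, Complex.normSq_eq_conj_mul_self]
    exact_mod_cast this
  have hform : star ψ ⬝ᵥ A *ᵥ ψ = ∑ i, (hA.eigenvalues i : ℂ) * Complex.normSq (c i) := by
    rw [hkey]
    simp only [hD, dotProduct, Matrix.mulVec_diagonal, Pi.star_apply,
      Complex.normSq_eq_conj_mul_self, Function.comp_apply]
    refine Finset.sum_congr rfl fun i _ => ?_
    push_cast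
    rw [show star (c i) = (starRingEnd ℂ) (c i) from rfl]
    ring
  rw [hform]
  calc ‖(∑ i, (hA.eigenvalues i : ℂ) * Complex.normSq (c i))‖
      ≤ ∑ i, ‖((hA.eigenvalues i : ℂ) * Complex.normSq (c i))‖ := by
        exact norm_sum_le _ _
    _ ≤ ∑ i, M * Complex.normSq (c i) := by
        refine Finset.sum_le_sum fun i _ => ?_
        rw [norm_mul]
        have h1 : ‖(hA.eigenvalues i : ℂ)‖ = |hA.eigenvalues i| := by
          rw [Complex.norm_real, Real.norm_eq_abs]
        have h2 : ‖(Complex.normSq (c i) : ℂ)‖ = Complex.normSq (c i) := by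
          rw [Complex.norm_real, Real.norm_eq_abs, _root_.abs_of_nonneg (Complex.normSq_nonneg _)]
        rw [h1, h2]
        exact mul_le_mul_of_nonneg_right (hM i) (Complex.normSq_nonneg _)
    _ = M := by rw [← Finset.mul_sum, hsum, mul_one]

/-- Theorem 2: -/
theorem max_entangled_maximizes_n_settings_steering (n : ℕ) (hn : 1 ≤ n)
    (u v : Fin n → Fin 3 → ℝ)
    (hu : ∀ i, u i ⬝ᵥ u i = 1) (hv : ∀ i, v i ⬝ᵥ v i = 1)
    (On : Matrix (Fin 2 × Fin 2) (Fin 2 × Fin 2) ℂ)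
    (hOn : On = ((1 / Real.sqrt n : ℝ) : ℂ) • ∑ i, pauliDot (u i) ⊗ₖ pauliDot (v i)) :
    ∃ U V : Matrix (Fin 2) (Fin 2) ℂ,
      U ∈ Matrix.unitaryGroup (Fin 2) ℂ ∧ V ∈ Matrix.unitaryGroup (Fin 2) ℂ ∧
      ∀ ψ : (Fin 2 × Fin 2) → ℂ, star ψ ⬝ᵥ ψ = 1 →
        ‖(star ψ ⬝ᵥ On.mulVec ψ)‖
          ≤ ‖(star ((U ⊗ₖ V).mulVec ((Real.sqrt 2)⁻¹ •
              ((Pi.single ((0 : Fin 2), (0 : Fin 2)) (1 : ℂ) : (Fin 2 × Fin 2) → ℂ)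
                + (Pi.single ((1 : Fin 2), (1 : Fin 2)) (1 : ℂ) : (Fin 2 × Fin 2) → ℂ))))
            ⬝ᵥ On.mulVec ((U ⊗ₖ V).mulVec ((Real.sqrt 2)⁻¹ •
              ((Pi.single ((0 : Fin 2), (0 : Fin 2)) (1 : ℂ) : (Fin 2 × Fin 2) → ℂ)
                + (Pi.single ((1 : Fin 2), (1 : Fin 2)) (1 : ℂ) : (Fin 2 × Fin 2) → ℂ)))))‖ := by
  have hH : On.IsHermitian := On_herm n u v _ On hOn
  have hsymm : On * S2 = S2 * On.map (starRingEnd ℂ) := On_symm n u v _ On hOn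
  obtain ⟨i0, -, hi0⟩ := Finset.exists_max_image Finset.univ
    (fun i => |hH.eigenvalues i|) ⟨((0 : Fin 2), (0 : Fin 2)), Finset.mem_univ _⟩
  set lam := hH.eigenvalues i0 with hlam
  set ψ0 : (Fin 2 × Fin 2) → ℂ := ⇑(hH.eigenvectorBasis i0) with hψ0
  have hψ0eig : On *ᵥ ψ0 = (lam : ℂ) • ψ0 := by
    rw [hψ0, hH.mulVec_eigenvectorBasis i0]
    funext x
    simp [Complex.real_smul, hlam]
  have hψ0norm : star ψ0 ⬝ᵥ ψ0 = 1 := by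
    have h1 := EuclideanSpace.inner_eq_star_dotProduct
      (hH.eigenvectorBasis i0) (hH.eigenvectorBasis i0)
    rw [inner_self_eq_norm_sq_to_K, hH.eigenvectorBasis.orthonormal.1 i0] at h1
    rw [dotProduct_comm]
    simpa using h1.symm
  obtain ⟨φ, hφeig, hφnorm, hφfix⟩ : ∃ φ : (Fin 2 × Fin 2) → ℂ,
      On *ᵥ φ = (lam : ℂ) • φ ∧ star φ ⬝ᵥ φ = 1 ∧ S2 *ᵥ star φ = φ := by
    have hθeig := theta_eig On hsymm lam ψ0 hψ0eig
    by_cases hcase : ψ0 + S2 *ᵥ star ψ0 = 0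
    · have hneg : S2 *ᵥ star ψ0 = -ψ0 := by
        funext x
        have hx := congrFun hcase x
        simp only [Pi.add_apply, Pi.neg_apply, Pi.zero_apply] at hx ⊢
        linear_combination hx
      refine ⟨Complex.I • ψ0, ?_, ?_, ?_⟩
      · rw [Matrix.mulVec_smul, hψ0eig, smul_comm]
      · rw [star_smul, smul_dotProduct, dotProduct_smul, hψ0norm]
        simp [Complex.star_def, Complex.conj_I, Complex.I_mul_I]
      · rw [star_smul, Matrix.mulVec_smul, hneg]
        simp [Complex.star_def, Complex.conj_I]
    · set φ0 : (Fin 2 × Fin 2) → ℂ := ψ0 + S2 *ᵥ star ψ0 with hφ0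
      have hφ0eig : On *ᵥ φ0 = (lam : ℂ) • φ0 := by
        rw [hφ0, Matrix.mulVec_add, hψ0eig, hθeig, smul_add]
      have hφ0fix : S2 *ᵥ star φ0 = φ0 := by
        rw [hφ0, star_add, Matrix.mulVec_add]
        have hdouble : S2 *ᵥ star (S2 *ᵥ star ψ0) = ψ0 := by
          rw [conj_mulVec, S2_map_star, star_star, Matrix.mulVec_mulVec, S2_mul_S2,
            Matrix.one_mulVec]
        rw [hdouble]
        exact add_comm _ _
      set t := ∑ x, Complex.normSq (φ0 x) with ht
      have htpos : 0 < t := by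
        have hx : ∃ x, φ0 x ≠ 0 := by
          by_contra hall
          push_neg at hall
          exact hcase (funext fun x => hall x)
        obtain ⟨x0, hx0⟩ := hx
        exact Finset.sum_pos' (fun x _ => Complex.normSq_nonneg _)
          ⟨x0, Finset.mem_univ _, Complex.normSq_pos.mpr hx0⟩
      have htdot : star φ0 ⬝ᵥ φ0 = (t : ℂ) := by
        rw [ht]
        push_cast
        simp [dotProduct, Complex.normSq_eq_conj_mul_self]
      have hsqrt_ne : Real.sqrt t ≠ 0 := by positivity
      refine ⟨(((Real.sqrt t)⁻¹ : ℝ) : ℂ) • φ0, ?_, ?_, ?_⟩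
      · rw [Matrix.mulVec_smul, hφ0eig, smul_comm]
      · rw [star_smul, smul_dotProduct, dotProduct_smul, htdot]
        simp only [Complex.star_def, Complex.conj_ofReal, smul_eq_mul]
        rw [← Complex.ofReal_mul, ← Complex.ofReal_mul]
        rw [show (Real.sqrt t)⁻¹ * ((Real.sqrt t)⁻¹ * t) = 1 by
          rw [← mul_assoc, ← mul_inv, Real.mul_self_sqrt htpos.le,
            inv_mul_cancel₀ (ne_of_gt htpos)]]
        norm_num
      · rw [star_smul, Matrix.mulVec_smul, hφ0fix]
        simp [Complex.star_def, Complex.conj_ofReal]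
  obtain ⟨h10, h11⟩ := theta_fixed_entries φ hφfix
  have hhalf : (starRingEnd ℂ) (φ (0, 0)) * (φ (0, 0))
      + (starRingEnd ℂ) (φ (0, 1)) * (φ (0, 1)) = 1 / 2 := by
    have hn1 := hφnorm
    simp only [dotProduct, Fintype.sum_prod_type, Fin.sum_univ_two, Pi.star_apply,
      Complex.star_def] at hn1
    rw [h10, h11] at hn1
    simp only [map_neg, Complex.conj_conj] at hn1
    linear_combination hn1 / 2
  refine ⟨!![((Real.sqrt 2 : ℝ) : ℂ) * (φ (0, 0)), ((Real.sqrt 2 : ℝ) : ℂ) * (φ (0, 1));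
       ((Real.sqrt 2 : ℝ) : ℂ) * (starRingEnd ℂ) (φ (0, 1)),
       -(((Real.sqrt 2 : ℝ) : ℂ) * (starRingEnd ℂ) (φ (0, 0)))], 1,
    U_unitary _ _ hhalf, Submonoid.one_mem _, ?_⟩
  intro ψ hψ
  have hvec := kron_one_mulVec_bell
    !![((Real.sqrt 2 : ℝ) : ℂ) * (φ (0, 0)), ((Real.sqrt 2 : ℝ) : ℂ) * (φ (0, 1));
       ((Real.sqrt 2 : ℝ) : ℂ) * (starRingEnd ℂ) (φ (0, 1)),
       -(((Real.sqrt 2 : ℝ) : ℂ) * (starRingEnd ℂ) (φ (0, 0)))] φ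
    (by simp) (by simp) (by simp [h10]) (by rw [h11]; simp [mul_neg])
  rw [hvec]
  have hOq : star φ ⬝ᵥ On *ᵥ φ = (lam : ℂ) := by
    rw [hφeig, dotProduct_smul, hφnorm, smul_eq_mul, mul_one]
  show ‖(star ψ ⬝ᵥ On *ᵥ ψ)‖ ≤ ‖(star φ ⬝ᵥ On *ᵥ φ)‖
  rw [hOq, Complex.norm_real, Real.norm_eq_abs]
  exact hermitian_quadform_bound On hH |lam| (fun i => hi0 i (Finset.mem_univ _)) ψ hψ
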